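/- For any n ≥ 1, the number of order ideals of the type A_{n-1} positive root poset equals the Catalan number C_n = (1/(n+1)) binom(2n, n). -/

import Mathlib

def Cseq (n : ℕ) : Type := {c : Fin n → ℕ // Monotone c ∧ ∀ j, c j ≤ (j : ℕ)}

instance (n : ℕ) : DecidableEq (Cseq n) := by unfold Cseq; infer_instance

noncomputable instance (n : ℕ) : Fintype (Cseq n) := by
  apply Fintype.ofInjective (fun c : Cseq n => (fun j => ⟨c.1 j, by
    have := c.2.2 j; omega⟩ : Fin n → Fin (n+1)))
  intro c c' h
  apply Subtype.ext; funext j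
  have := congrFun h j
  simpa [Fin.ext_iff] using this

lemma czero (n : ℕ) (c : Cseq (n+1)) : c.1 0 = ((0 : Fin (n+1)) : ℕ) := by
  have := c.2.2 0
  simp only [Fin.val_zero] at this ⊢
  omega

def kset (n : ℕ) (c : Cseq (n+1)) : Finset (Fin (n+1)) :=
  Finset.univ.filter fun j : Fin (n+1) => c.1 j = (j : ℕ)

lemma kset_ne (n : ℕ) (c : Cseq (n+1)) : (kset n c).Nonempty :=
  ⟨0, by simp [kset, Finset.mem_filter, czero n c]⟩

/-- largest diagonal touch -/
def kmax (n : ℕ) (c : Cseq (n+1)) : Fin (n+1) := (kset n c).max' (kset_ne n c)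

lemma kmax_spec (n : ℕ) (c : Cseq (n+1)) : c.1 (kmax n c) = ((kmax n c) : ℕ) := by
  have := Finset.max'_mem (kset n c) (kset_ne n c)
  simp only [kset, Finset.mem_filter] at this
  exact this.2

lemma le_kmax (n : ℕ) (c : Cseq (n+1)) (j : Fin (n+1)) (h : c.1 j = (j : ℕ)) :
    j ≤ kmax n c :=
  Finset.le_max' _ _ (by simp [kset, Finset.mem_filter, h])

lemma lt_of_kmax (n : ℕ) (c : Cseq (n+1)) (j : Fin (n+1)) (h : kmax n c < j) :
    c.1 j < (j : ℕ) := by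
  rcases lt_or_eq_of_le (c.2.2 j) with h' | h'
  · exact h'
  · exact absurd (le_kmax n c j h') (not_le.mpr h)

def splitA (n : ℕ) (c : Cseq (n+1)) : Cseq ((kmax n c : ℕ)) := by
  refine ⟨fun j => c.1 ⟨j.1, lt_trans j.2 (kmax n c).2⟩, ?_, ?_⟩
  · intro x y hxy
    exact c.2.1 (show x.1 ≤ y.1 from hxy)
  · intro j
    exact c.2.2 ⟨j.1, lt_trans j.2 (kmax n c).2⟩

def splitB (n : ℕ) (c : Cseq (n+1)) : Cseq (n - (kmax n c : ℕ)) := by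
  refine ⟨fun i => c.1 ⟨(kmax n c).1 + 1 + i.1, by have := (kmax n c).2; have := i.2; omega⟩
      - (kmax n c).1, ?_, ?_⟩
  · intro x y hxy
    exact Nat.sub_le_sub_right (c.2.1 (show (kmax n c).1 + 1 + x.1 ≤ (kmax n c).1 + 1 + y.1 by
      have : x.1 ≤ y.1 := hxy; omega)) _
  · intro i
    show c.1 ⟨(kmax n c).1 + 1 + i.1, _⟩ - (kmax n c).1 ≤ i.1
    have h := lt_of_kmax n c ⟨(kmax n c).1 + 1 + i.1, by have := (kmax n c).2; have := i.2; omega⟩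
      (show (kmax n c).1 < (kmax n c).1 + 1 + i.1 by omega)
    have h2 : c.1 ⟨(kmax n c).1 + 1 + i.1, _⟩ < (kmax n c).1 + 1 + i.1 := h
    omega

def splitMap (n : ℕ) (c : Cseq (n+1)) :
    Σ k : Fin (n+1), Cseq (k : ℕ) × Cseq (n - (k : ℕ)) :=
  ⟨kmax n c, splitA n c, splitB n c⟩

def jraw (n : ℕ) (k : Fin (n+1)) (a : Cseq (k : ℕ)) (b : Cseq (n - (k : ℕ))) :
    Fin (n+1) → ℕ := fun j =>
  if h : j.1 < k.1 then a.1 ⟨j.1, h⟩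
  else if h2 : j.1 = k.1 then k.1
  else k.1 + b.1 ⟨j.1 - k.1 - 1, by have := j.2; omega⟩

lemma jraw_lt (n : ℕ) (k : Fin (n+1)) (a : Cseq (k : ℕ)) (b : Cseq (n - (k : ℕ)))
    (j : Fin (n+1)) (h : j.1 < k.1) : jraw n k a b j = a.1 ⟨j.1, h⟩ := by
  simp [jraw, h]

lemma jraw_eq (n : ℕ) (k : Fin (n+1)) (a : Cseq (k : ℕ)) (b : Cseq (n - (k : ℕ)))
    (j : Fin (n+1)) (h : j.1 = k.1) : jraw n k a b j = k.1 := by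
  simp [jraw, h]

lemma jraw_gt (n : ℕ) (k : Fin (n+1)) (a : Cseq (k : ℕ)) (b : Cseq (n - (k : ℕ)))
    (j : Fin (n+1)) (h : k.1 < j.1) :
    jraw n k a b j = k.1 + b.1 ⟨j.1 - k.1 - 1, by have := j.2; omega⟩ := by
  have h1 : ¬ j.1 < k.1 := by omega
  have h2 : ¬ j.1 = k.1 := by omega
  simp [jraw, h1, h2]

lemma jraw_bound (n : ℕ) (k : Fin (n+1)) (a : Cseq (k : ℕ)) (b : Cseq (n - (k : ℕ)))
    (j : Fin (n+1)) : jraw n k a b j ≤ j.1 := by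
  rcases lt_trichotomy j.1 k.1 with h | h | h
  · rw [jraw_lt n k a b j h]; exact a.2.2 _
  · rw [jraw_eq n k a b j h]; omega
  · rw [jraw_gt n k a b j h]
    have := b.2.2 ⟨j.1 - k.1 - 1, by have := j.2; omega⟩
    simp only at this; omega

lemma jraw_gt_lt (n : ℕ) (k : Fin (n+1)) (a : Cseq (k : ℕ)) (b : Cseq (n - (k : ℕ)))
    (j : Fin (n+1)) (h : k.1 < j.1) : jraw n k a b j < j.1 := by
  rw [jraw_gt n k a b j h]
  have := b.2.2 ⟨j.1 - k.1 - 1, by have := j.2; omega⟩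
  simp only at this; omega

lemma jraw_mono (n : ℕ) (k : Fin (n+1)) (a : Cseq (k : ℕ)) (b : Cseq (n - (k : ℕ))) :
    Monotone (jraw n k a b) := by
  intro x y hxy
  have hxy' : x.1 ≤ y.1 := hxy
  rcases lt_trichotomy x.1 k.1 with hx | hx | hx
  · rcases lt_trichotomy y.1 k.1 with hy | hy | hy
    · rw [jraw_lt n k a b x hx, jraw_lt n k a b y hy]
      exact a.2.1 (show (⟨x.1, hx⟩ : Fin (k:ℕ)) ≤ ⟨y.1, hy⟩ from hxy')
    · rw [jraw_lt n k a b x hx, jraw_eq n k a b y hy]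
      have := a.2.2 ⟨x.1, hx⟩; simp only at this; omega
    · rw [jraw_lt n k a b x hx, jraw_gt n k a b y hy]
      have := a.2.2 ⟨x.1, hx⟩; simp only at this; omega
  · rcases lt_trichotomy y.1 k.1 with hy | hy | hy
    · omega
    · rw [jraw_eq n k a b x hx, jraw_eq n k a b y hy]
    · rw [jraw_eq n k a b x hx, jraw_gt n k a b y hy]; omega
  · have hy : k.1 < y.1 := by omega
    rw [jraw_gt n k a b x hx, jraw_gt n k a b y hy]
    have := b.2.1 (show (⟨x.1 - k.1 - 1, by have := x.2; omega⟩ : Fin (n - (k:ℕ))) ≤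
      ⟨y.1 - k.1 - 1, by have := y.2; omega⟩ from by simp only [Fin.le_def]; omega)
    omega

def joinMap (n : ℕ) (x : Σ k : Fin (n+1), Cseq (k : ℕ) × Cseq (n - (k : ℕ))) :
    Cseq (n+1) :=
  ⟨jraw n x.1 x.2.1 x.2.2, jraw_mono n x.1 x.2.1 x.2.2, fun j => jraw_bound n x.1 x.2.1 x.2.2 j⟩

lemma join_split (n : ℕ) (c : Cseq (n+1)) : joinMap n (splitMap n c) = c := by
  apply Subtype.ext; funext j
  show jraw n (kmax n c) (splitA n c) (splitB n c) j = c.1 j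
  rcases lt_trichotomy j.1 (kmax n c).1 with h | h | h
  · rw [jraw_lt n _ _ _ j h]
    rfl
  · rw [jraw_eq n _ _ _ j h]
    have hj : j = kmax n c := Fin.ext h
    rw [hj, kmax_spec]
  · rw [jraw_gt n _ _ _ j h]
    show (kmax n c).1 + (c.1 ⟨(kmax n c).1 + 1 + (j.1 - (kmax n c).1 - 1), _⟩ - (kmax n c).1) = _
    have hidx : (⟨(kmax n c).1 + 1 + (j.1 - (kmax n c).1 - 1), by have := j.2; omega⟩ : Fin (n+1)) = j :=
      Fin.ext (by simp only; omega)
    rw [hidx]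
    have hck : c.1 (kmax n c) ≤ c.1 j := c.2.1 (le_of_lt (by exact h))
    rw [kmax_spec] at hck
    omega

lemma split_inj (n : ℕ) : Function.Injective (splitMap n) :=
  Function.LeftInverse.injective (join_split n)

lemma join_inj (n : ℕ) : Function.Injective (joinMap n) := by
  rintro ⟨k1, a1, b1⟩ ⟨k2, a2, b2⟩ h
  have hr : jraw n k1 a1 b1 = jraw n k2 a2 b2 := congrArg Subtype.val h
  have hk : k1 = k2 := by
    by_contra hne
    rcases lt_trichotomy k1.1 k2.1 with hlt | heq | hlt
    · have h1 := jraw_gt_lt n k1 a1 b1 k2 hlt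
      have h2 := jraw_eq n k2 a2 b2 k2 rfl
      rw [hr] at h1; omega
    · exact hne (Fin.ext heq)
    · have h1 := jraw_gt_lt n k2 a2 b2 k1 hlt
      have h2 := jraw_eq n k1 a1 b1 k1 rfl
      rw [← hr] at h1; omega
  subst hk
  have ha : a1 = a2 := by
    apply Subtype.ext; funext j
    have hj : (j : ℕ) < k1.1 := j.2
    have := congrFun hr ⟨j.1, lt_trans hj k1.2⟩
    rw [jraw_lt n k1 a1 b1 _ hj, jraw_lt n k1 a2 b2 _ hj] at this
    simpa using this
  have hb : b1 = b2 := by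
    apply Subtype.ext; funext i
    have hi : (i : ℕ) < n - k1.1 := i.2
    have hidx : k1.1 < k1.1 + 1 + i.1 := by omega
    have := congrFun hr ⟨k1.1 + 1 + i.1, by omega⟩
    rw [jraw_gt n k1 a1 b1 _ hidx, jraw_gt n k1 a2 b2 _ hidx] at this
    have hii : (⟨k1.1 + 1 + i.1 - k1.1 - 1, by omega⟩ : Fin (n - (k1:ℕ))) = i :=
      Fin.ext (by simp only; omega)
    rw [hii] at this
    omega
  rw [ha, hb]

noncomputable def fc (n : ℕ) : ℕ := Fintype.card (Cseq n)

lemma fc_zero : fc 0 = 1 := by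
  rw [fc, Fintype.card_eq_one_iff]
  refine ⟨⟨fun j => j.elim0, by intro a b _; exact a.elim0, fun j => j.elim0⟩, ?_⟩
  intro c; apply Subtype.ext; funext j; exact j.elim0

lemma fc_succ (n : ℕ) : fc (n+1) = ∑ i : Fin (n+1), fc i * fc (n - i) := by
  have e1 : Fintype.card (Cseq (n+1)) =
      Fintype.card (Σ k : Fin (n+1), Cseq (k : ℕ) × Cseq (n - (k : ℕ))) :=
    le_antisymm (Fintype.card_le_of_injective _ (split_inj n))
      (Fintype.card_le_of_injective _ (join_inj n))
  rw [fc, e1, Fintype.card_sigma]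
  exact Finset.sum_congr rfl fun i _ => by rw [Fintype.card_prod]; rfl

lemma fc_eq_catalan (n : ℕ) : fc n = catalan n := by
  induction n using Nat.strong_induction_on with
  | _ n ih =>
    match n with
    | 0 => simpa using fc_zero
    | n + 1 =>
      rw [fc_succ, catalan_succ]
      refine Finset.sum_congr rfl fun i _ => ?_
      rw [ih i (by omega), ih (n - i) (by omega)]

section Ideals

variable (n : ℕ)

/-- ideal associated to a sequence -/
def Ic (c : Cseq n) : Finset {p : Fin n × Fin n // p.1 < p.2} :=
  Finset.univ.filter fun p => c.1 p.1.2 ≤ (p.1.1 : ℕ)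

lemma mem_Ic (c : Cseq n) (p : {p : Fin n × Fin n // p.1 < p.2}) :
    p ∈ Ic n c ↔ c.1 p.1.2 ≤ (p.1.1 : ℕ) := by
  simp [Ic]

lemma Ic_ideal (c : Cseq n) : ∀ a ∈ Ic n c, ∀ b : {p : Fin n × Fin n // p.1 < p.2},
    a.1.1 ≤ b.1.1 → b.1.2 ≤ a.1.2 → b ∈ Ic n c := by
  intro a ha b h1 h2
  rw [mem_Ic] at ha ⊢
  calc c.1 b.1.2 ≤ c.1 a.1.2 := c.2.1 h2
    _ ≤ (a.1.1 : ℕ) := ha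
    _ ≤ (b.1.1 : ℕ) := h1

lemma Ic_subset_le (c c' : Cseq n) (h : Ic n c ⊆ Ic n c') (j : Fin n) :
    c'.1 j ≤ c.1 j := by
  rcases lt_or_ge (c.1 j) (j : ℕ) with hlt | hge
  · have hq : (⟨c.1 j, lt_trans hlt j.2⟩ : Fin n) < j := hlt
    have hmem : (⟨(⟨c.1 j, lt_trans hlt j.2⟩, j), hq⟩ :
        {p : Fin n × Fin n // p.1 < p.2}) ∈ Ic n c := by
      rw [mem_Ic]
    have := h hmem
    rw [mem_Ic] at this
    exact this
  · have := c'.2.2 j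
    omega

noncomputable def cOf (I : Finset {p : Fin n × Fin n // p.1 < p.2}) : Fin n → ℕ := fun j =>
  (insert (j : ℕ) ((I.filter fun p => p.1.2 = j).image fun p => ((p.1.1 : ℕ)))).min'
    (Finset.insert_nonempty _ _)

lemma cOf_le (I : Finset {p : Fin n × Fin n // p.1 < p.2}) (j : Fin n) :
    cOf n I j ≤ (j : ℕ) :=
  Finset.min'_le _ _ (Finset.mem_insert_self _ _)

lemma cOf_min_le (I : Finset {p : Fin n × Fin n // p.1 < p.2}) (j : Fin n)
    (p : {p : Fin n × Fin n // p.1 < p.2}) (hp : p ∈ I) (hpj : p.1.2 = j) :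
    cOf n I j ≤ (p.1.1 : ℕ) :=
  Finset.min'_le _ _ (Finset.mem_insert_of_mem
    (Finset.mem_image_of_mem _ (Finset.mem_filter.mpr ⟨hp, hpj⟩)))

lemma cOf_achieved (I : Finset {p : Fin n × Fin n // p.1 < p.2}) (j : Fin n)
    (h : cOf n I j < (j : ℕ)) :
    ∃ p ∈ I, p.1.2 = j ∧ (p.1.1 : ℕ) = cOf n I j := by
  have hmem := Finset.min'_mem
    (insert (j : ℕ) ((I.filter fun p => p.1.2 = j).image fun p => ((p.1.1 : ℕ))))
    (Finset.insert_nonempty _ _)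
  rcases Finset.mem_insert.mp hmem with h' | h'
  · exact absurd h' (by rw [cOf] at h; omega)
  · rcases Finset.mem_image.mp h' with ⟨p, hp, hv⟩
    rcases Finset.mem_filter.mp hp with ⟨hp1, hp2⟩
    exact ⟨p, hp1, hp2, hv⟩

lemma cOf_mono (I : Finset {p : Fin n × Fin n // p.1 < p.2})
    (hI : ∀ a ∈ I, ∀ b : {p : Fin n × Fin n // p.1 < p.2},
      a.1.1 ≤ b.1.1 → b.1.2 ≤ a.1.2 → b ∈ I) : Monotone (cOf n I) := by
  intro j j' hjj'
  have hjj : (j : ℕ) ≤ (j' : ℕ) := hjj'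
  rcases lt_or_ge (cOf n I j') (j : ℕ) with hlt | hge
  · have hlt' : cOf n I j' < (j' : ℕ) := by omega
    rcases cOf_achieved n I j' hlt' with ⟨p, hp, hpj, hv⟩
    have hb : (p.1.1 : Fin n) < j := by
      rw [Fin.lt_def]; omega
    have hbI : (⟨(p.1.1, j), hb⟩ : {p : Fin n × Fin n // p.1 < p.2}) ∈ I := by
      apply hI p hp
      · exact le_refl _
      · show j ≤ p.1.2
        rw [hpj]; exact hjj'
    have := cOf_min_le n I j _ hbI rfl
    simpa [hv] using this
  · have := cOf_le n I j
    omega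

lemma Ic_cOf (I : Finset {p : Fin n × Fin n // p.1 < p.2})
    (hI : ∀ a ∈ I, ∀ b : {p : Fin n × Fin n // p.1 < p.2},
      a.1.1 ≤ b.1.1 → b.1.2 ≤ a.1.2 → b ∈ I) :
    Ic n ⟨cOf n I, cOf_mono n I hI, cOf_le n I⟩ = I := by
  ext p
  refine (mem_Ic n _ p).trans ?_
  show cOf n I p.1.2 ≤ (p.1.1 : ℕ) ↔ p ∈ I
  constructor
  · intro h
    have hpp : (p.1.1 : ℕ) < (p.1.2 : ℕ) := p.2
    have hlt : cOf n I p.1.2 < (p.1.2 : ℕ) := by omega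
    rcases cOf_achieved n I p.1.2 hlt with ⟨q, hq, hqj, hv⟩
    apply hI q hq
    · show q.1.1 ≤ p.1.1
      rw [Fin.le_def]; omega
    · show p.1.2 ≤ q.1.2
      rw [hqj]
  · intro h
    exact cOf_min_le n I p.1.2 p h rfl

end Ideals

theorem stmt12 (n : ℕ) (hn : 1 ≤ n) :
    (Finset.univ.filter fun I : Finset {p : Fin n × Fin n // p.1 < p.2} =>
        ∀ a ∈ I, ∀ b : {p : Fin n × Fin n // p.1 < p.2},
          a.1.1 ≤ b.1.1 → b.1.2 ≤ a.1.2 → b ∈ I).card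
      = catalan n := by
  classical
  have key : (Finset.univ.filter fun I : Finset {p : Fin n × Fin n // p.1 < p.2} =>
        ∀ a ∈ I, ∀ b : {p : Fin n × Fin n // p.1 < p.2},
          a.1.1 ≤ b.1.1 → b.1.2 ≤ a.1.2 → b ∈ I).card
      = (Finset.univ : Finset (Cseq n)).card := by
    refine (Finset.card_bij (fun (c : Cseq n) (_ : c ∈ Finset.univ) => Ic n c)
      ?_ ?_ ?_).symm
    · intro c _
      rw [Finset.mem_filter]
      exact ⟨Finset.mem_univ _, Ic_ideal n c⟩
    · intro c1 _ c2 _ h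
      apply Subtype.ext; funext j
      have h1 := Ic_subset_le n c1 c2 (le_of_eq h) j
      have h2 := Ic_subset_le n c2 c1 (le_of_eq h.symm) j
      omega
    · intro I hmem
      rw [Finset.mem_filter] at hmem
      exact ⟨⟨cOf n I, cOf_mono n I hmem.2, cOf_le n I⟩, Finset.mem_univ _,
        Ic_cOf n I hmem.2⟩
  rw [key, Finset.card_univ]
  exact fc_eq_catalan n
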